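/- For all reals α > 2 and b > 0, ∫_0^∞ ( 1 − 1/(1 + b·z^{−α}) ) · z dz = ( π / ( α · sin(2π/α) ) ) · b^{2/α}. -/

import Mathlib

open MeasureTheory Real

lemma real_beta (s : ℝ) (h0 : 0 < s) (h1 : s < 1) :
    ∫ t in (0:ℝ)..1, t ^ (s-1) * (1-t) ^ (-s) = π / Real.sin (π * s) := by
  have hs : (0:ℝ) < (1 : ℝ) - s := by linarith
  have hbeta := Complex.Gamma_mul_Gamma_eq_betaIntegral
    (s := (s:ℂ)) (t := ((1 - s : ℝ) : ℂ)) (by simpa using h0) (by simpa using hs)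
  have hrefl := Complex.Gamma_mul_Gamma_one_sub (s : ℂ)
  rw [show ((1 - s : ℝ) : ℂ) = 1 - (s:ℂ) by push_cast; ring] at hbeta
  rw [hrefl, show (s:ℂ) + (1 - (s:ℂ)) = 1 by ring, Complex.Gamma_one, one_mul] at hbeta
  -- hbeta : ↑π / Complex.sin (↑π * ↑s) = Complex.betaIntegral ↑s (1 - ↑s)
  have key : Complex.betaIntegral (s : ℂ) (1 - (s:ℂ))
      = ((∫ t in (0:ℝ)..1, t ^ (s-1) * (1-t) ^ (-s) : ℝ) : ℂ) := by
    rw [Complex.betaIntegral, ← intervalIntegral.integral_ofReal]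
    refine intervalIntegral.integral_congr fun x hx => ?_
    rw [Set.uIcc_of_le (by norm_num : (0:ℝ) ≤ 1)] at hx
    obtain ⟨hx0, hx1⟩ := hx
    rw [show ((s:ℂ) - 1) = ((s - 1 : ℝ) : ℂ) by push_cast; ring,
      show (1 - (s:ℂ) - 1) = ((-s : ℝ) : ℂ) by push_cast; ring,
      show (1 - (x:ℂ)) = ((1 - x : ℝ) : ℂ) by push_cast; ring,
      ← Complex.ofReal_cpow hx0, ← Complex.ofReal_cpow (by linarith : (0:ℝ) ≤ 1 - x)]
    push_cast
    ring
  rw [key] at hbeta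
  have : ((π / Real.sin (π * s) : ℝ) : ℂ) = ((∫ t in (0:ℝ)..1, t ^ (s-1) * (1-t) ^ (-s) : ℝ) : ℂ) := by
    rw [← hbeta]
    push_cast [Complex.ofReal_sin]
    norm_num
  exact_mod_cast this.symm

lemma beta_Ioi (s : ℝ) (h0 : 0 < s) (h1 : s < 1)
    (hbeta : ∫ t in (0:ℝ)..1, t ^ (s-1) * (1-t) ^ (-s) = π / Real.sin (π * s)) :
    ∫ x in Set.Ioi (0:ℝ), x ^ (s-1) / (1+x) = π / Real.sin (π * s) := by
  set f : ℝ → ℝ := fun t => t / (1 - t) with hf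
  have himg : f '' Set.Ioo (0:ℝ) 1 = Set.Ioi 0 := by
    ext y
    constructor
    · rintro ⟨t, ⟨ht0, ht1⟩, rfl⟩
      exact div_pos ht0 (by linarith)
    · intro hy
      have hy' : (0:ℝ) < y := hy
      have h1y : (1:ℝ) + y ≠ 0 := by linarith
      refine ⟨y / (1 + y), ⟨div_pos hy' (by linarith), ?_⟩, ?_⟩
      · rw [div_lt_one (by linarith)]; linarith
      · have h2 : 1 - y/(1+y) = 1/(1+y) := by field_simp; ring
        simp only [hf]
        rw [h2]; field_simp
  have hderiv : ∀ t ∈ Set.Ioo (0:ℝ) 1,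
      HasDerivWithinAt f (((1 - t)^2)⁻¹) (Set.Ioo 0 1) t := by
    intro t ⟨ht0, ht1⟩
    have hne : (1 - t) ≠ 0 := by linarith
    have : HasDerivAt f ((1 * (1 - t) - t * (-1)) / (1 - t)^2) t :=
      (hasDerivAt_id t).div ((hasDerivAt_id t).const_sub 1) hne
    convert this.hasDerivWithinAt using 1
    exacts [rfl, rfl, by ring]
  have hinj : Set.InjOn f (Set.Ioo (0:ℝ) 1) := by
    intro a ⟨ha0, ha1⟩ c ⟨hc0, hc1⟩ h
    simp only [hf] at h
    rw [div_eq_div_iff (by linarith) (by linarith)] at h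
    nlinarith
  have key := integral_image_eq_integral_abs_deriv_smul measurableSet_Ioo hderiv hinj
    (fun x => x ^ (s-1) / (1+x))
  rw [himg] at key
  rw [key]
  have congr1 : ∀ t ∈ Set.Ioo (0:ℝ) 1,
      |((1 - t)^2)⁻¹| • (f t ^ (s-1) / (1 + f t)) = t ^ (s-1) * (1-t) ^ (-s) := by
    intro t ⟨ht0, ht1⟩
    have h1t : (0:ℝ) < 1 - t := by linarith
    have hft : 1 + f t = 1 / (1 - t) := by simp only [hf]; field_simp; ring
    have hpow : f t ^ (s-1) = t ^ (s-1) * (1-t) ^ (1-s) := by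
      simp only [hf]
      rw [Real.div_rpow ht0.le h1t.le, div_eq_mul_inv, ← Real.rpow_neg h1t.le,
        show -(s-1) = 1-s by ring]
    have habs : |((1 - t)^2)⁻¹| = ((1 - t)^2)⁻¹ :=
      abs_of_pos (inv_pos.mpr (pow_pos h1t 2))
    rw [smul_eq_mul, habs, hft, hpow]
    rw [div_div_eq_mul_div, div_one]
    have hcomb : (1-t) ^ (-s) = (1-t) ^ (1-s) * (1-t) ^ (-1 : ℝ) := by
      rw [← Real.rpow_add h1t, show (1:ℝ)-s + -1 = -s by ring]
    rw [hcomb, Real.rpow_neg_one]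
    field_simp
  rw [setIntegral_congr_fun measurableSet_Ioo congr1, ← integral_Ioc_eq_integral_Ioo,
    ← intervalIntegral.integral_of_le zero_le_one, hbeta]

/-- full-range interference integral.
For all reals `α > 2` and `b > 0`,
`∫_0^∞ (1 − 1/(1 + b·z^{−α}))·z dz = (π/(α·sin(2π/α)))·b^{2/α}`. -/
theorem stmt_15 (α b : ℝ) (hα : 2 < α) (hb : 0 < b) :
    ∫ z in Set.Ioi (0 : ℝ), (1 - 1 / (1 + b * z ^ (-α))) * z
      = π / (α * Real.sin (2 * π / α)) * b ^ (2 / α) := by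
  have hα0 : (0:ℝ) < α := by linarith
  have hαne : α ≠ 0 := hα0.ne'
  -- Step 1: rewrite integrand
  have step1 : ∫ z in Set.Ioi (0 : ℝ), (1 - 1 / (1 + b * z ^ (-α))) * z
      = ∫ z in Set.Ioi (0 : ℝ), b * z / (z ^ α + b) := by
    refine setIntegral_congr_fun measurableSet_Ioi fun z hz => ?_
    have hz0 : (0:ℝ) < z := hz
    have hzα : (0:ℝ) < z ^ α := Real.rpow_pos_of_pos hz0 α
    have hab : (0:ℝ) < z ^ α + b := by linarith
    have hden : (0:ℝ) < 1 + b * (z ^ α)⁻¹ := by positivity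
    rw [Real.rpow_neg hz0.le]
    field_simp; ring
  rw [step1]
  -- Step 2: change of variables x ↦ (b x)^(1/α)
  set f : ℝ → ℝ := fun x => (b * x) ^ (1/α) with hf
  have himg : f '' Set.Ioi (0:ℝ) = Set.Ioi 0 := by
    ext y
    constructor
    · rintro ⟨x, hx, rfl⟩
      exact Real.rpow_pos_of_pos (mul_pos hb hx) _
    · intro hy
      have hy0 : (0:ℝ) < y := hy
      refine ⟨y ^ α / b, div_pos (Real.rpow_pos_of_pos hy0 α) hb, ?_⟩
      simp only [hf]
      rw [mul_div_cancel₀ _ hb.ne', ← Real.rpow_mul hy0.le, mul_one_div_cancel hαne,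
        Real.rpow_one]
  have hderiv : ∀ x ∈ Set.Ioi (0:ℝ),
      HasDerivWithinAt f (1/α * (b*x) ^ (1/α - 1) * b) (Set.Ioi 0) x := by
    intro x hx
    have hbx : b * x ≠ 0 := (mul_pos hb hx).ne'
    have h1 : HasDerivAt (fun y : ℝ => y ^ (1/α)) (1/α * (b*x) ^ (1/α - 1)) (b*x) :=
      Real.hasDerivAt_rpow_const (Or.inl hbx)
    have h2 : HasDerivAt (fun y : ℝ => b * y) b x := by
      simpa using (hasDerivAt_id x).const_mul b
    exact (h1.comp x h2).hasDerivWithinAt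
  have hinj : Set.InjOn f (Set.Ioi (0:ℝ)) := by
    have : StrictMonoOn f (Set.Ioi (0:ℝ)) := by
      intro x hx y hy hxy
      exact Real.rpow_lt_rpow (mul_pos hb hx).le
        (mul_lt_mul_of_pos_left hxy hb) (by positivity)
    exact this.injOn
  have key := integral_image_eq_integral_abs_deriv_smul measurableSet_Ioi hderiv hinj
    (fun z => b * z / (z ^ α + b))
  rw [himg] at key
  rw [key]
  -- Step 3: simplify the transformed integrand
  have congr2 : ∀ x ∈ Set.Ioi (0:ℝ),
      |1/α * (b*x) ^ (1/α - 1) * b| • (b * f x / (f x ^ α + b))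
        = b ^ (2/α) / α * (x ^ (2/α - 1) / (1 + x)) := by
    intro x hx
    have hx0 : (0:ℝ) < x := hx
    have hbx : (0:ℝ) < b * x := mul_pos hb hx0
    have hfx : f x ^ α = b * x := by
      simp only [hf]
      rw [← Real.rpow_mul hbx.le, one_div_mul_cancel hαne, Real.rpow_one]
    have habs : |1/α * (b*x) ^ (1/α - 1) * b| = 1/α * (b*x) ^ (1/α - 1) * b := by
      apply abs_of_pos
      have := Real.rpow_pos_of_pos hbx (1/α - 1)
      positivity
    rw [smul_eq_mul, habs, hfx]
    simp only [hf]
    have hsplit1 : (b*x) ^ (1/α - 1) = b ^ (1/α - 1) * x ^ (1/α - 1) :=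
      Real.mul_rpow hb.le hx0.le
    have hsplit2 : (b*x) ^ (1/α) = b ^ (1/α) * x ^ (1/α) :=
      Real.mul_rpow hb.le hx0.le
    rw [hsplit1, hsplit2]
    have hb1 : b ^ (2/α) = b ^ (1/α - 1) * b ^ (1/α) * b := by
      rw [show (2/α) = (1/α - 1) + (1/α) + 1 by ring, Real.rpow_add hb, Real.rpow_add hb,
        Real.rpow_one]
    have hx1 : x ^ (2/α - 1) = x ^ (1/α - 1) * x ^ (1/α) := by
      rw [show (2/α - 1) = (1/α - 1) + (1/α) by ring, Real.rpow_add hx0]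
    have hden : b * x + b = b * (1 + x) := by ring
    rw [hden, hb1, hx1]
    have h1x : (0:ℝ) < 1 + x := by linarith
    field_simp
  rw [setIntegral_congr_fun measurableSet_Ioi congr2, integral_const_mul]
  have h0 : (0:ℝ) < 2/α := by positivity
  have h1 : 2/α < 1 := (div_lt_one hα0).mpr hα
  rw [beta_Ioi (2/α) h0 h1 (real_beta (2/α) h0 h1), show π * (2/α) = 2 * π / α by ring]
  ring
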